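/- arXiv:2010.09560 — 7 statements merged into one kernel-verified Lean document; each statement's English description precedes it below -/
import Mathlib

section
/- Let α be a positive real number such that G_α = ⟨A, B_α⟩ is a free group of rank 2 with free basis {A, B_α}. Then the stabilizer of ∞ in G_α under the Möbius action is exactly {A^k : k ∈ ℤ}, and the stabilizer of 0 is exactly {B_α^k : k ∈ ℤ}. -/
open Matrix OnePoint

noncomputable abbrev SL2 := Matrix.SpecialLinearGroup (Fin 2) ℝ

noncomputable def mobius (g : SL2) : OnePoint ℝ → OnePoint ℝ :=
  fun p => Option.elim p
    (if g.1 1 0 = 0 then ∞ else ((g.1 0 0 / g.1 1 0 : ℝ) : OnePoint ℝ))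
    (fun x => if g.1 1 0 * x + g.1 1 1 = 0 then ∞
      else (((g.1 0 0 * x + g.1 0 1) / (g.1 1 0 * x + g.1 1 1) : ℝ) : OnePoint ℝ))

noncomputable def matA : SL2 := ⟨!![1,1;0,1], by norm_num [Matrix.det_fin_two_of]⟩
noncomputable def matB (α : ℝ) : SL2 := ⟨!![1,0;α,1], by norm_num [Matrix.det_fin_two_of]⟩

lemma matA_zpow (k : ℤ) : ((matA ^ k : SL2) : Matrix (Fin 2) (Fin 2) ℝ) = !![1,(k:ℝ);0,1] := by
  induction k using Int.induction_on with
  | zero => simp [Matrix.one_fin_two]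
  | succ n ih =>
      rw [_root_.zpow_add_one, Matrix.SpecialLinearGroup.coe_mul, ih]
      simp [matA, Matrix.mul_fin_two]
      norm_num [add_comm]
  | pred n ih =>
      rw [_root_.zpow_sub_one, Matrix.SpecialLinearGroup.coe_mul, ih,
        Matrix.SpecialLinearGroup.coe_inv]
      simp [matA, Matrix.adjugate_fin_two_of, Matrix.mul_fin_two]
      ring_nf

lemma matB_zpow (α : ℝ) (k : ℤ) :
    ((matB α ^ k : SL2) : Matrix (Fin 2) (Fin 2) ℝ) = !![1,0;(k:ℝ)*α,1] := by
  induction k using Int.induction_on with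
  | zero => simp [Matrix.one_fin_two]
  | succ n ih =>
      rw [_root_.zpow_add_one, Matrix.SpecialLinearGroup.coe_mul, ih]
      simp [matB, Matrix.mul_fin_two]
      ring_nf
  | pred n ih =>
      rw [_root_.zpow_sub_one, Matrix.SpecialLinearGroup.coe_mul, ih,
        Matrix.SpecialLinearGroup.coe_inv]
      simp [matB, Matrix.adjugate_fin_two_of, Matrix.mul_fin_two]
      ring_nf

lemma conj_comm_A (g : SL2) (hc : g.1 1 0 = 0) :
    (g * matA * g⁻¹) * matA = matA * (g * matA * g⁻¹) := by
  have hdet : g.1 0 0 * g.1 1 1 = 1 := by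
    have := g.2
    rw [Matrix.det_fin_two, hc] at this
    linarith
  apply Subtype.ext
  simp only [Matrix.SpecialLinearGroup.coe_mul, Matrix.SpecialLinearGroup.coe_inv]
  rw [Matrix.eta_fin_two g.1]
  simp [Matrix.adjugate_fin_two_of, hc, matA, Matrix.mul_fin_two]
  ring_nf

lemma conj_comm_B (α : ℝ) (g : SL2) (hb : g.1 0 1 = 0) :
    (g * matB α * g⁻¹) * matB α = matB α * (g * matB α * g⁻¹) := by
  have hdet : g.1 0 0 * g.1 1 1 = 1 := by
    have := g.2
    rw [Matrix.det_fin_two, hb] at this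
    linarith
  apply Subtype.ext
  simp only [Matrix.SpecialLinearGroup.coe_mul, Matrix.SpecialLinearGroup.coe_inv]
  rw [Matrix.eta_fin_two g.1]
  simp [Matrix.adjugate_fin_two_of, hb, matB, Matrix.mul_fin_two]
  ring_nf

lemma freegroup_subsingleton_gen {T : Type*} [Subsingleton T] (z : FreeGroup T)
    (hz : ∀ x : T, FreeGroup.of x = z) (y : FreeGroup T) : ∃ k : ℤ, y = z ^ k := by
  induction y using FreeGroup.induction_on with
  | C1 => exact ⟨0, by simp⟩
  | of x => exact ⟨1, by rw [zpow_one, ← hz x]⟩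
  | inv_of x _ => exact ⟨-1, by rw [_root_.zpow_neg, zpow_one, ← hz x]⟩
  | mul x y ihx ihy =>
      obtain ⟨k, rfl⟩ := ihx
      obtain ⟨m, rfl⟩ := ihy
      exact ⟨k + m, (zpow_add z k m).symm⟩

lemma exists_gen_of_comm (H : Subgroup (FreeGroup Bool))
    (hc : ∀ u v : H, u * v = v * u)
    (hne : (FreeGroup.of true * FreeGroup.of false : FreeGroup Bool)
      ≠ FreeGroup.of false * FreeGroup.of true) :
    ∃ h : FreeGroup Bool, ∀ x ∈ H, ∃ k : ℤ, x = h ^ k := by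
  haveI : Subsingleton (IsFreeGroup.Generators H) := by
    classical
    constructor
    intro t₁ t₂
    by_contra hne'
    set ψ : H →* FreeGroup Bool := IsFreeGroup.lift
      (fun t => if t = t₁ then FreeGroup.of true
        else if t = t₂ then FreeGroup.of false else 1) with hψ
    have h1 : ψ (IsFreeGroup.of t₁) = FreeGroup.of true := by
      rw [hψ, IsFreeGroup.lift_of]; simp
    have h2 : ψ (IsFreeGroup.of t₂) = FreeGroup.of false := by
      rw [hψ, IsFreeGroup.lift_of]
      simp [Ne.symm hne', hne']
    have hcomm := hc (IsFreeGroup.of t₁) (IsFreeGroup.of t₂)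
    apply hne
    have := congrArg ψ hcomm
    simpa [h1, h2] using this
  set e := IsFreeGroup.toFreeGroup (G := H) with he
  obtain hE | ⟨⟨t⟩⟩ := isEmpty_or_nonempty (IsFreeGroup.Generators H)
  · refine ⟨1, fun x hx => ?_⟩
    obtain ⟨k, hk⟩ := freegroup_subsingleton_gen (1 : FreeGroup (IsFreeGroup.Generators H))
      (fun x => (hE.false x).elim) (e ⟨x, hx⟩)
    have : (⟨x, hx⟩ : H) = e.symm (1 ^ k) := by
      rw [← hk]; exact (e.symm_apply_apply _).symm
    refine ⟨k, ?_⟩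
    have := congrArg (Subtype.val) this
    simpa using this
  · refine ⟨(e.symm (FreeGroup.of t) : H), fun x hx => ?_⟩
    obtain ⟨k, hk⟩ := freegroup_subsingleton_gen (FreeGroup.of t)
      (fun x => by rw [Subsingleton.elim x t]) (e ⟨x, hx⟩)
    have : (⟨x, hx⟩ : H) = e.symm (FreeGroup.of t) ^ k := by
      rw [← map_zpow, ← hk]; exact (e.symm_apply_apply _).symm
    refine ⟨k, ?_⟩
    have := congrArg (Subtype.val) this
    simpa using this

lemma centralizer_gen (c : Bool)
    (hne : (FreeGroup.of true * FreeGroup.of false : FreeGroup Bool)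
      ≠ FreeGroup.of false * FreeGroup.of true)
    (x : FreeGroup Bool) (hx : Commute x (FreeGroup.of c)) :
    ∃ k : ℤ, x = FreeGroup.of c ^ k := by
  set a := FreeGroup.of c with ha
  set H := Subgroup.closure ({x, a} : Set (FreeGroup Bool)) with hH
  have hxa : ∀ s ∈ ({x, a} : Set (FreeGroup Bool)), ∀ t ∈ ({x, a} : Set (FreeGroup Bool)),
      Commute s t := by
    rintro s (rfl | rfl) t (rfl | rfl)
    · exact Commute.refl _
    · exact hx
    · exact hx.symm
    · exact Commute.refl _
  have key : ∀ u ∈ H, ∀ s ∈ ({x, a} : Set (FreeGroup Bool)), Commute s u := by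
    intro u hu
    induction hu using Subgroup.closure_induction with
    | mem v hv => exact fun s hs => hxa s hs v hv
    | one => exact fun s _ => Commute.one_right s
    | mul v w _ _ ihv ihw => exact fun s hs => (ihv s hs).mul_right (ihw s hs)
    | inv v _ ihv => exact fun s hs => (ihv s hs).inv_right
  have hcomm : ∀ u v : H, u * v = v * u := by
    rintro ⟨u, hu⟩ ⟨v, hv⟩
    ext
    show u * v = v * u
    induction hu using Subgroup.closure_induction with
    | mem w hw => exact ((key v hv) w hw)
    | one => simp
    | mul w w' hw hw' ihw ihw' => rw [mul_assoc, ihw', ← mul_assoc, ihw, mul_assoc]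
    | inv w hw ihw => exact (Commute.inv_left ihw : _)
  obtain ⟨h, hh⟩ := exists_gen_of_comm H hcomm hne
  obtain ⟨n, hn⟩ := hh x (Subgroup.subset_closure (by simp))
  obtain ⟨m, hm⟩ := hh a (Subgroup.subset_closure (by simp))
  classical
  set σ : FreeGroup Bool →* Multiplicative ℤ :=
    FreeGroup.lift (fun d => Multiplicative.ofAdd (if d = c then (1:ℤ) else 0)) with hσ
  have hσa : σ a = Multiplicative.ofAdd 1 := by rw [ha, hσ, FreeGroup.lift_apply_of]; simp
  have hms : m * (Multiplicative.toAdd (σ h)) = 1 := by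
    have : σ a = σ h ^ m := by rw [hm, map_zpow]
    rw [hσa] at this
    have := congrArg Multiplicative.toAdd this
    simpa [toAdd_zpow, mul_comm] using this.symm
  have hm1 : m = 1 ∨ m = -1 := by
    have : IsUnit m := IsUnit.of_mul_eq_one _ hms
    exact Int.isUnit_iff.mp this
  rcases hm1 with rfl | rfl
  · exact ⟨n, by rw [hn, hm, zpow_one]⟩
  · refine ⟨-n, ?_⟩
    have hh' : h = a⁻¹ := by
      rw [hm]; group
    rw [hn, hh']
    group

lemma centralizer_conj (c : Bool)
    (hne : (FreeGroup.of true * FreeGroup.of false : FreeGroup Bool)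
      ≠ FreeGroup.of false * FreeGroup.of true)
    (x : FreeGroup Bool)
    (hx : Commute (x * FreeGroup.of c * x⁻¹) (FreeGroup.of c)) :
    ∃ k : ℤ, x = FreeGroup.of c ^ k := by
  classical
  obtain ⟨k, hk⟩ := centralizer_gen c hne _ hx
  set σ : FreeGroup Bool →* Multiplicative ℤ :=
    FreeGroup.lift (fun d => Multiplicative.ofAdd (if d = c then (1:ℤ) else 0)) with hσ
  have hσa : σ (FreeGroup.of c) = Multiplicative.ofAdd 1 := by
    rw [hσ, FreeGroup.lift_apply_of]; simp
  have hk1 : k = 1 := by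
    have := congrArg σ hk
    simp only [_root_.map_mul, _root_.map_inv, map_zpow, hσa] at this
    have := congrArg Multiplicative.toAdd this
    simpa [toAdd_zpow, hσa] using this.symm
  rw [hk1, zpow_one] at hk
  have : Commute x (FreeGroup.of c) := by
    have := hk
    rw [mul_inv_eq_iff_eq_mul] at this
    exact this
  exact centralizer_gen c hne x this


lemma elim_infty' {Y : Type*} (a : Y) (f : ℝ → Y) :
    Option.elim (∞ : OnePoint ℝ) a f = a := rfl

lemma elim_coe' {Y : Type*} (a : Y) (f : ℝ → Y) (x : ℝ) :
    Option.elim ((x : ℝ) : OnePoint ℝ) a f = f x := rfl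
theorem stmt3 (α : ℝ) (hα : 0 < α)
    (hfree : Function.Injective
      (FreeGroup.lift (fun b : Bool => if b then matA else matB α))) :
    (∀ g ∈ Subgroup.closure ({matA, matB α} : Set SL2),
      (mobius g ∞ = ∞ ↔ ∃ k : ℤ, g = matA ^ k)) ∧
    (∀ g ∈ Subgroup.closure ({matA, matB α} : Set SL2),
      (mobius g ((0:ℝ) : OnePoint ℝ) = ((0:ℝ) : OnePoint ℝ) ↔ ∃ k : ℤ, g = matB α ^ k)) := by
  classical
  set φ : FreeGroup Bool →* SL2 :=
    FreeGroup.lift (fun b : Bool => if b then matA else matB α) with hφdef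
  have hφt : φ (FreeGroup.of true) = matA := by rw [hφdef, FreeGroup.lift_apply_of]; simp
  have hφf : φ (FreeGroup.of false) = matB α := by rw [hφdef, FreeGroup.lift_apply_of]; simp
  have hfree' : Function.Injective φ := hfree
  have hrange : ∀ g ∈ Subgroup.closure ({matA, matB α} : Set SL2), ∃ x, φ x = g := by
    intro g hg
    have hle : Subgroup.closure ({matA, matB α} : Set SL2) ≤ φ.range := by
      rw [Subgroup.closure_le]
      rintro y (rfl | rfl)
      · exact ⟨FreeGroup.of true, hφt⟩
      · exact ⟨FreeGroup.of false, hφf⟩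
    exact hle hg
  have hne : (FreeGroup.of true * FreeGroup.of false : FreeGroup Bool)
      ≠ FreeGroup.of false * FreeGroup.of true := by
    intro h
    have h2 := congrArg φ h
    rw [_root_.map_mul, _root_.map_mul, hφt, hφf] at h2
    have h3 := congrArg (fun M : SL2 => M.1 0 0) h2
    simp only [Matrix.SpecialLinearGroup.coe_mul] at h3
    simp [matA, matB, Matrix.mul_fin_two] at h3
    linarith
  constructor
  · intro g hg
    constructor
    · intro hfix
      have hc : g.1 1 0 = 0 := by
        by_contra hcc
        simp [mobius, elim_infty', hcc, OnePoint.coe_ne_infty] at hfix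
      obtain ⟨x, rfl⟩ := hrange g hg
      have hcm : (x * FreeGroup.of true * x⁻¹) * FreeGroup.of true
          = FreeGroup.of true * (x * FreeGroup.of true * x⁻¹) := by
        apply hfree'
        simp only [_root_.map_mul, _root_.map_inv, hφt]
        exact conj_comm_A (φ x) hc
      obtain ⟨k, hk⟩ := centralizer_conj true hne x hcm
      exact ⟨k, by rw [hk, map_zpow, hφt]⟩
    · rintro ⟨k, rfl⟩
      simp [mobius, elim_infty', matA_zpow]
  · intro g hg
    constructor
    · intro hfix
      have hd : g.1 1 1 ≠ 0 := by
        intro hdd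
        simp [mobius, elim_coe', hdd, OnePoint.infty_ne_coe] at hfix
      have hb : g.1 0 1 = 0 := by
        simp [mobius, elim_coe', hd, OnePoint.coe_eq_coe, div_eq_zero_iff] at hfix
        exact hfix
      obtain ⟨x, rfl⟩ := hrange g hg
      have hcm : (x * FreeGroup.of false * x⁻¹) * FreeGroup.of false
          = FreeGroup.of false * (x * FreeGroup.of false * x⁻¹) := by
        apply hfree'
        simp only [_root_.map_mul, _root_.map_inv, hφf]
        exact conj_comm_B α (φ x) hb
      obtain ⟨k, hk⟩ := centralizer_conj false hne x hcm
      exact ⟨k, by rw [hk, map_zpow, hφf]⟩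
    · rintro ⟨k, rfl⟩
      simp [mobius, elim_coe', matB_zpow]
end

section
/- Let α be a real number and suppose there exists X ∈ G_α = ⟨A, B_α⟩ with X(0) = 1/2 under the Möbius action. Then Y := A·h(X) (where h is the automorphism [[a,b],[c,d]] ↦ [[a,-b],[-c,d]]) satisfies Y(0) = 1/2, and Y ≠ X whenever X and Y are compared as words via the abelianization counting A-exponents. -/
open Matrix OnePoint

noncomputable def hmap (g : SL2) : SL2 :=
  ⟨!![g.1 0 0, -(g.1 0 1); -(g.1 1 0), g.1 1 1], by
    have h := g.2
    rw [Matrix.det_fin_two] at h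
    rw [Matrix.det_fin_two_of]
    ring_nf
    ring_nf at h
    linarith⟩

noncomputable def Jmat : Matrix (Fin 2) (Fin 2) ℝ := !![1,0;0,-1]

lemma Jmat_mul_Jmat : Jmat * Jmat = 1 := by
  simp [Jmat, Matrix.mul_fin_two, ← Matrix.one_fin_two]

noncomputable def Hhom : SL2 →* SL2 where
  toFun g := ⟨Jmat * g.1 * Jmat, by
    have : (Jmat * g.1 * Jmat).det = Jmat.det * g.1.det * Jmat.det := by
      rw [Matrix.det_mul, Matrix.det_mul]
    rw [this, g.2]
    norm_num [Jmat, Matrix.det_fin_two_of]⟩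
  map_one' := Subtype.ext (by
    show Jmat * (1 : Matrix (Fin 2) (Fin 2) ℝ) * Jmat = 1
    rw [mul_one, Jmat_mul_Jmat])
  map_mul' g g' := Subtype.ext (by
    show Jmat * (g.1 * g'.1) * Jmat = (Jmat * g.1 * Jmat) * (Jmat * g'.1 * Jmat)
    have : (Jmat * g.1 * Jmat) * (Jmat * g'.1 * Jmat)
        = Jmat * g.1 * (Jmat * Jmat) * g'.1 * Jmat := by
      noncomm_ring
    rw [this, Jmat_mul_Jmat, mul_one]
    noncomm_ring)

theorem stmt7 (α : ℝ) (w : FreeGroup Bool)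
    (q : FreeGroup Bool →* SL2)
    (hq : q = FreeGroup.lift (fun b : Bool => if b then matA else matB α))
    (ht : FreeGroup Bool →* FreeGroup Bool)
    (hht : ht = FreeGroup.lift (fun b : Bool => (FreeGroup.of b)⁻¹))
    (hX : mobius (q w) ((0:ℝ) : OnePoint ℝ) = (((1:ℝ)/2 : ℝ) : OnePoint ℝ)) :
    mobius (q (FreeGroup.of true * ht w)) ((0:ℝ) : OnePoint ℝ)
        = (((1:ℝ)/2 : ℝ) : OnePoint ℝ) ∧
    FreeGroup.of true * ht w ≠ w := by
  -- key homomorphism identity : q ∘ ht = Hhom ∘ q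
  have hcomp : q.comp ht = Hhom.comp q := by
    apply FreeGroup.ext_hom
    intro b
    simp only [MonoidHom.comp_apply, hht, hq, FreeGroup.lift_apply_of, map_inv]
    cases b <;> {
      apply inv_eq_of_mul_eq_one_left
      apply Subtype.ext
      show (Jmat * _ * Jmat) * _ = 1
      simp [Hhom, Jmat, matA, matB, Matrix.mul_fin_two, ← Matrix.one_fin_two]
    }
  have hqA : q (FreeGroup.of true) = matA := by
    rw [hq]; simp
  have key : q (FreeGroup.of true * ht w) = matA * Hhom (q w) := by
    rw [_root_.map_mul, hqA]
    congr 1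
    have := congrArg (fun f => f w) hcomp
    simpa using this
  set a := (q w).1 0 0 with ha
  set b := (q w).1 0 1 with hb
  set c := (q w).1 1 0 with hc
  set d := (q w).1 1 1 with hd
  -- analyze hX
  have hX' : (if c * 0 + d = 0 then (∞ : OnePoint ℝ)
      else (((a * 0 + b) / (c * 0 + d) : ℝ) : OnePoint ℝ)) = (((1:ℝ)/2 : ℝ) : OnePoint ℝ) := by
    simpa [mobius, OnePoint.some] using hX
  have hdne : d ≠ 0 := by
    intro h
    rw [if_pos (by simpa using h)] at hX'
    exact (OnePoint.infty_ne_coe _) hX'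
  have hbd : b / d = 1 / 2 := by
    rw [if_neg (by simpa using hdne)] at hX'
    have := OnePoint.coe_injective hX'
    simpa using this
  have hYmat : (matA * Hhom (q w)).1 = !![a - c, -b + d; -c, d] := by
    show (matA.1 * (Jmat * (q w).1 * Jmat)) = _
    rw [Matrix.eta_fin_two (q w).1, ← ha, ← hb, ← hc, ← hd]
    simp [matA, Jmat, Matrix.mul_fin_two]
    ring_nf
  constructor
  · rw [key]
    have h10 : (matA * Hhom (q w)).1 1 0 = -c := by rw [hYmat]; simp
    have h11 : (matA * Hhom (q w)).1 1 1 = d := by rw [hYmat]; simp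
    have h00 : (matA * Hhom (q w)).1 0 0 = a - c := by rw [hYmat]; simp
    have h01 : (matA * Hhom (q w)).1 0 1 = -b + d := by rw [hYmat]; simp
    simp only [mobius, OnePoint.some, Option.elim, h10, h11, h00, h01]
    show (if -c * 0 + d = 0 then (∞ : OnePoint ℝ) else ((((a - c) * 0 + (-b + d)) / (-c * 0 + d) : ℝ) : OnePoint ℝ)) = (((1:ℝ)/2 : ℝ) : OnePoint ℝ)
    rw [if_neg (by simpa using hdne)]
    congr 1
    rw [mul_zero, zero_add, mul_zero, zero_add]
    field_simp at hbd ⊢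
    linarith
  · -- abelianization argument
    intro heq
    set φ : FreeGroup Bool →* Multiplicative ℤ :=
      FreeGroup.lift (fun b : Bool => if b then Multiplicative.ofAdd 1 else 1) with hφ
    have hφt : φ (ht w) = (φ w)⁻¹ := by
      have : φ.comp ht = φ⁻¹ := by
        apply FreeGroup.ext_hom
        intro b
        simp [hht]
      have := congrArg (fun f => f w) this
      simpa using this
    have := congrArg φ heq
    rw [_root_.map_mul, hφt, hφ] at this
    simp only [FreeGroup.lift_apply_of, if_true] at this
    have h2 : (1 : ℤ) - Multiplicative.toAdd (φ w) = Multiplicative.toAdd (φ w) := by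
      have := congrArg Multiplicative.toAdd this
      simpa [sub_eq_add_neg] using this
    omega
end

section
/- With u_n, l_n defined by (u₁,l₁) = (-1, 1-α), u_{n+1} = u_n - l_n, l_{n+1} = α u_n + (1-α) l_n, the polynomials u_n and l_n have no common complex root: for every n ≥ 1 and every α₀ ∈ ℂ, it is not the case that u_n(α₀) = 0 and l_n(α₀) = 0. -/
open Polynomial

noncomputable def ul : ℕ → Polynomial ℤ × Polynomial ℤ
  | 0 => (0, 1)
  | n + 1 => ((ul n).1 - (ul n).2, X * (ul n).1 + (1 - X) * (ul n).2)

noncomputable def upoly (n : ℕ) : Polynomial ℤ := (ul n).1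
noncomputable def lpoly (n : ℕ) : Polynomial ℤ := (ul n).2

noncomputable def pq : ℕ → Polynomial ℤ × Polynomial ℤ
  | 0 => (1, 0)
  | n + 1 => ((pq n).1 - (pq n).2, X * (pq n).1 + (1 - X) * (pq n).2)

lemma det_inv (n : ℕ) : (pq n).1 * (ul n).2 - (pq n).2 * (ul n).1 = 1 := by
  induction n with
  | zero => simp [pq, ul]
  | succ n ih =>
    simp only [pq, ul]
    ring_nf
    ring_nf at ih
    linear_combination ih

theorem stmt10 (n : ℕ) (hn : 1 ≤ n) (α₀ : ℂ) :
    ¬ (Polynomial.aeval α₀ (upoly n) = 0 ∧ Polynomial.aeval α₀ (lpoly n) = 0) := by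
  rintro ⟨hu, hl⟩
  have h := congrArg (Polynomial.aeval α₀) (det_inv n)
  simp only [map_sub, map_mul, map_one] at h
  rw [show (ul n).1 = upoly n from rfl, show (ul n).2 = lpoly n from rfl, hu, hl] at h
  simp at h
end

section
/- Define p_n(α) = (-1)^{n+1}(2·u_n(α) - l_n(α)), where u_n, l_n are the second-column entries of (B_α A^{-1})^n. Then p_n is a monic polynomial of degree n with integer coefficients, and for any real α₀ with l_n(α₀) ≠ 0, p_n(α₀) = 0 if and only if (B_{α₀} A^{-1})^n(0) = 1/2 under the Möbius action. -/
open Matrix OnePoint Polynomial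

noncomputable def ppoly (n : ℕ) : Polynomial ℤ :=
  (-1) ^ (n + 1) * (2 * upoly n - lpoly n)

lemma upoly_succ (n : ℕ) : upoly (n+1) = upoly n - lpoly n := rfl
lemma lpoly_succ (n : ℕ) : lpoly (n+1) = X * upoly n + (1 - X) * lpoly n := rfl

lemma coe_matBA (α : ℝ) :
    ((matB α * matA⁻¹ : SL2) : Matrix (Fin 2) (Fin 2) ℝ) = !![1,-1;α,1-α] := by
  have h : ((matA⁻¹ : SL2) : Matrix (Fin 2) (Fin 2) ℝ) = !![1,-1;0,1] := by
    rw [Matrix.SpecialLinearGroup.coe_inv]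
    simp [matA, Matrix.adjugate_fin_two]
  rw [Matrix.SpecialLinearGroup.coe_mul, h]
  show (!![1,0;α,1] : Matrix (Fin 2) (Fin 2) ℝ) * !![1,-1;0,1] = _
  ext i j
  fin_cases i <;> fin_cases j <;>
    simp [Matrix.mul_apply, Fin.sum_univ_two] <;> ring

lemma mat_pow (α : ℝ) (n : ℕ) :
    ((!![1,-1;α,1-α] : Matrix (Fin 2) (Fin 2) ℝ) ^ n) 0 1 = Polynomial.aeval α (upoly n) ∧
    ((!![1,-1;α,1-α] : Matrix (Fin 2) (Fin 2) ℝ) ^ n) 1 1 = Polynomial.aeval α (lpoly n) := by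
  induction n with
  | zero => simp [upoly, lpoly, ul]
  | succ n ih =>
    obtain ⟨h1, h2⟩ := ih
    rw [pow_succ', upoly_succ, lpoly_succ]
    constructor <;>
      simp only [Matrix.mul_apply, Fin.sum_univ_two, h1, h2, map_add, map_sub,
        _root_.map_mul, Polynomial.aeval_X] <;>
      simp <;> ring_nf <;> try ring

lemma entries_pow (α : ℝ) (n : ℕ) :
    (((matB α * matA⁻¹ : SL2) ^ n : SL2) : Matrix (Fin 2) (Fin 2) ℝ) 0 1
      = Polynomial.aeval α (upoly n) ∧
    (((matB α * matA⁻¹ : SL2) ^ n : SL2) : Matrix (Fin 2) (Fin 2) ℝ) 1 1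
      = Polynomial.aeval α (lpoly n) := by
  rw [Matrix.SpecialLinearGroup.coe_pow, coe_matBA]
  exact mat_pow α n

lemma deg_key (n : ℕ) : (upoly (n+1)).natDegree ≤ n ∧ (lpoly (n+1)).natDegree ≤ n+1 ∧
    (lpoly (n+1)).coeff (n+1) = (-1)^(n+1) := by
  induction n with
  | zero =>
    have hu : upoly 1 = -1 := by simp [upoly, ul]
    have hl : lpoly 1 = 1 - X := by simp [lpoly, ul]
    refine ⟨?_, ?_, ?_⟩
    · simp [hu]
    · rw [hl]; exact le_trans (natDegree_sub_le _ _) (by simp)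
    · rw [hl]; simp [Polynomial.coeff_one]
  | succ n ih =>
    obtain ⟨hu, hl, hc⟩ := ih
    have hXd : (X : Polynomial ℤ).natDegree ≤ 1 := natDegree_X_le
    have h1X : (1 - X : Polynomial ℤ).natDegree ≤ 1 :=
      le_trans (natDegree_sub_le _ _) (by simp)
    have hu' : (upoly (n+2)).natDegree ≤ n+1 := by
      rw [upoly_succ]
      exact le_trans (natDegree_sub_le _ _) (max_le (hu.trans (Nat.le_succ n)) hl)
    have hl' : (lpoly (n+2)).natDegree ≤ n+2 := by
      rw [lpoly_succ]
      refine le_trans (natDegree_add_le _ _) (max_le ?_ ?_)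
      · exact le_trans natDegree_mul_le (by omega)
      · exact le_trans natDegree_mul_le (by omega)
    have hc' : (lpoly (n+2)).coeff (n+2) = (-1)^(n+2) := by
      rw [lpoly_succ]
      have e2 : (upoly (n+1)).coeff (n+1) = 0 :=
        coeff_eq_zero_of_natDegree_lt (lt_of_le_of_lt hu (Nat.lt_succ_self n))
      have e3 : (lpoly (n+1)).coeff (n+2) = 0 :=
        coeff_eq_zero_of_natDegree_lt (lt_of_le_of_lt hl (Nat.lt_succ_self (n+1)))
      rw [coeff_add, coeff_X_mul, e2, sub_mul, one_mul, coeff_sub, e3, coeff_X_mul, hc]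
      ring
    exact ⟨hu', hl', hc'⟩

theorem stmt11 (n : ℕ) (hn : 1 ≤ n) :
    (ppoly n).Monic ∧ (ppoly n).natDegree = n ∧
    ∀ α₀ : ℝ, Polynomial.aeval α₀ (lpoly n) ≠ 0 →
      (Polynomial.aeval α₀ (ppoly n) = 0 ↔
        mobius ((matB α₀ * matA⁻¹) ^ n) ((0:ℝ) : OnePoint ℝ)
          = (((1:ℝ)/2 : ℝ) : OnePoint ℝ)) := by
  obtain ⟨m, rfl⟩ : ∃ m, n = m + 1 := ⟨n - 1, by omega⟩
  obtain ⟨hu, hl, hc⟩ := deg_key m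
  have hun : (upoly (m+1)).coeff (m+1) = 0 :=
    coeff_eq_zero_of_natDegree_lt (lt_of_le_of_lt hu (Nat.lt_succ_self m))
  have h2d : (2 : Polynomial ℤ).natDegree = 0 := natDegree_ofNat 2
  have hpd : (ppoly (m+1)).natDegree ≤ m+1 := by
    rw [ppoly]
    refine le_trans natDegree_mul_le ?_
    have h1 : ((-1 : Polynomial ℤ) ^ (m+1+1)).natDegree = 0 := by
      simp [natDegree_pow]
    rw [h1, zero_add]
    refine le_trans (natDegree_sub_le _ _) (max_le ?_ hl)
    exact le_trans natDegree_mul_le (by omega)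
  have hpc : (ppoly (m+1)).coeff (m+1) = 1 := by
    have : ppoly (m+1) = (-1)^(m+2) * (2 * upoly (m+1)) - (-1)^(m+2) * lpoly (m+1) := by
      rw [ppoly]; ring
    rw [this, coeff_sub]
    have c1 : ((-1 : Polynomial ℤ)^(m+2) * (2 * upoly (m+1))).coeff (m+1) = 0 := by
      have : ((-1 : Polynomial ℤ)^(m+2) * (2 * upoly (m+1))) = C ((-1)^(m+2) * 2) * upoly (m+1) := by
        push_cast
        ring_nf
        simp [C_eq_intCast]
        ring
      rw [this, coeff_C_mul, hun, mul_zero]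
    have c2 : ((-1 : Polynomial ℤ)^(m+2) * lpoly (m+1)).coeff (m+1) = -1 := by
      have hC : ((-1 : Polynomial ℤ)^(m+2) * lpoly (m+1)) = C ((-1)^(m+2)) * lpoly (m+1) := by
        simp [C_eq_intCast]
      rw [hC, coeff_C_mul, hc, ← pow_add]
      have hodd : Odd (m+2+(m+1)) := ⟨m+1, by ring⟩
      exact hodd.neg_one_pow
    rw [c1, c2]
    ring
  have hmonic : (ppoly (m+1)).Monic := monic_of_natDegree_le_of_coeff_eq_one _ hpd hpc
  have hdeg : (ppoly (m+1)).natDegree = m+1 :=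
    le_antisymm hpd (le_natDegree_of_ne_zero (by rw [hpc]; exact one_ne_zero))
  refine ⟨hmonic, hdeg, ?_⟩
  intro α₀ hα
  obtain ⟨e1, e2⟩ := entries_pow α₀ (m+1)
  have hval : Polynomial.aeval α₀ (ppoly (m+1)) =
      (-1:ℝ)^(m+2) * (2 * Polynomial.aeval α₀ (upoly (m+1)) - Polynomial.aeval α₀ (lpoly (m+1))) := by
    simp only [ppoly, map_sub, _root_.map_mul, map_pow, map_neg, _root_.map_one, map_ofNat]
  set g := ((matB α₀ * matA⁻¹ : SL2) ^ (m+1))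
  have hmob : mobius g ((0:ℝ) : OnePoint ℝ)
      = ((g.1 0 1 / g.1 1 1 : ℝ) : OnePoint ℝ) := by
    have hne : g.1 1 0 * 0 + g.1 1 1 ≠ 0 := by
      rw [mul_zero, zero_add, e2]; exact hα
    show (if g.1 1 0 * 0 + g.1 1 1 = 0 then (∞ : OnePoint ℝ)
        else (((g.1 0 0 * 0 + g.1 0 1) / (g.1 1 0 * 0 + g.1 1 1) : ℝ) : OnePoint ℝ)) = _
    rw [if_neg hne]
    norm_num
  rw [hmob, hval, e1, e2]
  rw [OnePoint.coe_eq_coe]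
  constructor
  · intro h
    have hps : 2 * Polynomial.aeval α₀ (upoly (m+1)) - Polynomial.aeval α₀ (lpoly (m+1)) = 0 := by
      have hne : ((-1:ℝ))^(m+2) ≠ 0 := by positivity
      exact (mul_eq_zero.1 h).resolve_left hne
    field_simp
    linarith [hps]
  · intro h
    have : Polynomial.aeval α₀ (upoly (m+1)) = Polynomial.aeval α₀ (lpoly (m+1)) / 2 := by
      field_simp at h ⊢
      linarith [h]
    rw [this]; ring
end

section
/- Let I ⊆ ℝ be open, and let f : I → ℝ ∪ {∞} ≅ S¹ be continuous (via the Cayley transform). If f is anticlockwise at every point of I, then the map g defined by g(x) = f(x) + x is also anticlockwise at every point of I. Here f is anticlockwise at x₀ if either f or -1/f is strictly increasing on a neighborhood of x₀ (whichever is finite there). -/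
open Matrix OnePoint Polynomial

def IncAt (I : Set ℝ) (f : ℝ → OnePoint ℝ) (a : ℝ) : Prop :=
  ∃ ε > 0, Set.Ioo (a - ε) (a + ε) ⊆ I ∧
    ∀ x ∈ Set.Ioo (a - ε) (a + ε), ∀ y ∈ Set.Ioo (a - ε) (a + ε), x < y →
      ∃ rx ry : ℝ, f x = (rx : OnePoint ℝ) ∧ f y = (ry : OnePoint ℝ) ∧ rx < ry

def DecAt (I : Set ℝ) (f : ℝ → OnePoint ℝ) (a : ℝ) : Prop :=
  ∃ ε > 0, Set.Ioo (a - ε) (a + ε) ⊆ I ∧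
    ∀ x ∈ Set.Ioo (a - ε) (a + ε), ∀ y ∈ Set.Ioo (a - ε) (a + ε), x < y →
      ∃ rx ry : ℝ, f x = (rx : OnePoint ℝ) ∧ f y = (ry : OnePoint ℝ) ∧ ry < rx

noncomputable def negInv (p : OnePoint ℝ) : OnePoint ℝ :=
  Option.elim p (((0 : ℝ) : OnePoint ℝ))
    (fun x => if x = 0 then ∞ else ((-1 / x : ℝ) : OnePoint ℝ))

def AnticlockwiseAt (I : Set ℝ) (f : ℝ → OnePoint ℝ) (a : ℝ) : Prop :=
  IncAt I f a ∨ IncAt I (fun x => negInv (f x)) a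

def ClockwiseAt (I : Set ℝ) (f : ℝ → OnePoint ℝ) (a : ℝ) : Prop :=
  DecAt I f a ∨ DecAt I (fun x => negInv (f x)) a

noncomputable def addPt (p : OnePoint ℝ) (c : ℝ) : OnePoint ℝ :=
  Option.elim p ∞ (fun r => ((r + c : ℝ) : OnePoint ℝ))

/-! ### Auxiliary lemmas -/

lemma negInvLt_pos {u v : ℝ} (hu : 0 < u) (huv : u < v) : -1/u < -1/v := by
  have h1 : 1/v < 1/u := one_div_lt_one_div_of_lt hu huv
  have e1 : (-1:ℝ)/u = -(1/u) := by ring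
  have e2 : (-1:ℝ)/v = -(1/v) := by ring
  rw [e1, e2]; linarith

lemma negInvLt_neg {u v : ℝ} (hv : v < 0) (huv : u < v) : -1/u < -1/v := by
  have h1 : 1/(-u) < 1/(-v) := one_div_lt_one_div_of_lt (by linarith) (by linarith)
  have e1 : (-1:ℝ)/u = 1/(-u) := by rw [div_neg, neg_div]
  have e2 : (-1:ℝ)/v = 1/(-v) := by rw [div_neg, neg_div]
  rw [e1, e2]; linarith

lemma lt_of_negInv_pos {s t : ℝ} (ht : 0 < t) (h : -1/s < -1/t) : s < t := by
  by_contra hc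
  rcases eq_or_lt_of_le (le_of_not_gt hc) with h'|h'
  · rw [h'] at h; exact lt_irrefl _ h
  · exact absurd h (not_lt.2 (le_of_lt (negInvLt_pos ht h')))

lemma lt_of_negInv_neg {s t : ℝ} (hs : s < 0) (h : -1/s < -1/t) : s < t := by
  by_contra hc
  rcases eq_or_lt_of_le (le_of_not_gt hc) with h'|h'
  · rw [h'] at h; exact lt_irrefl _ h
  · exact absurd h (not_lt.2 (le_of_lt (negInvLt_neg hs h')))

lemma negInv_neg_of_pos {s : ℝ} (hs : 0 < s) : -1/s < 0 :=
  div_neg_of_neg_of_pos (by norm_num) hs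

lemma negInv_pos_of_neg {s : ℝ} (hs : s < 0) : 0 < -1/s := by
  have e : (-1:ℝ)/s = 1/(-s) := by rw [div_neg, neg_div]
  rw [e]; exact one_div_pos.2 (by linarith)

lemma pos_of_negInv_neg {s : ℝ} (hs : s ≠ 0) (h : -1/s < 0) : 0 < s := by
  rcases lt_or_gt_of_ne hs with h'|h'
  · exact absurd (negInv_pos_of_neg h') (not_lt.2 h.le)
  · exact h'

lemma neg_of_negInv_pos {s : ℝ} (hs : s ≠ 0) (h : 0 < -1/s) : s < 0 := by
  rcases lt_or_gt_of_ne hs with h'|h'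
  · exact h'
  · exact absurd (negInv_neg_of_pos h') (not_lt.2 h.le)

lemma negInv_infty : negInv ∞ = ((0:ℝ) : OnePoint ℝ) := rfl

lemma negInv_coe {s : ℝ} (hs : s ≠ 0) : negInv (s : OnePoint ℝ) = ((-1/s : ℝ) : OnePoint ℝ) := by
  show (if s = 0 then ∞ else ((-1/s : ℝ) : OnePoint ℝ)) = _
  rw [if_neg hs]

lemma addPt_coe (r c : ℝ) : addPt (r : OnePoint ℝ) c = ((r + c : ℝ) : OnePoint ℝ) := rfl

lemma addPt_infty (c : ℝ) : addPt ∞ c = ∞ := rfl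

/-- From `negInv p = ↑r` with `r ≠ 0`, recover `p = ↑s`, `s ≠ 0`, `r = -1/s`. -/
lemma finite_of_negInv {p : OnePoint ℝ} {r : ℝ} (hr : r ≠ 0)
    (h : negInv p = (r : OnePoint ℝ)) : ∃ s : ℝ, p = (s : OnePoint ℝ) ∧ s ≠ 0 ∧ r = -1/s := by
  match p with
  | Option.none =>
    exfalso; apply hr
    have h1 : ((0:ℝ) : OnePoint ℝ) = (r : OnePoint ℝ) := h
    exact (OnePoint.coe_eq_coe.mp h1).symm
  | Option.some s =>
    by_cases hs : s = 0
    · exfalso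
      have h2 : negInv (Option.some s) = ∞ := by
        show (if s = 0 then ∞ else ((-1/s : ℝ) : OnePoint ℝ)) = _
        rw [if_pos hs]
      rw [h2] at h
      exact (OnePoint.infty_ne_coe r) h
    · refine ⟨s, rfl, hs, ?_⟩
      have h3 : ((-1/s : ℝ) : OnePoint ℝ) = (r : OnePoint ℝ) := by
        rw [← negInv_coe hs]; exact h
      exact (OnePoint.coe_eq_coe.mp h3).symm

lemma incAt_addPt {I : Set ℝ} {f : ℝ → OnePoint ℝ} {a : ℝ} (h : IncAt I f a) :
    IncAt I (fun x => addPt (f x) x) a := by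
  obtain ⟨ε, hε, hsub, hmono⟩ := h
  refine ⟨ε, hε, hsub, fun x hx y hy hxy => ?_⟩
  obtain ⟨rx, ry, hfx, hfy, hlt⟩ := hmono x hx y hy hxy
  exact ⟨rx + x, ry + y, by simp only [hfx, addPt_coe], by simp only [hfy, addPt_coe],
    by linarith⟩

theorem stmt15 (I : Set ℝ) (hI : IsOpen I) (f : ℝ → OnePoint ℝ)
    (hf : ContinuousOn f I)
    (hanti : ∀ a ∈ I, AnticlockwiseAt I f a) :
    ∀ a ∈ I, AnticlockwiseAt I (fun x => addPt (f x) x) a := by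
  intro a ha
  have hcont : ContinuousAt f a := hf.continuousAt (hI.mem_nhds ha)
  rcases hanti a ha with hinc | hinc
  · exact Or.inl (incAt_addPt hinc)
  obtain ⟨ε, hε, hsub, hmono⟩ := hinc
  have haI : a ∈ Set.Ioo (a - ε) (a + ε) := ⟨by linarith, by linarith⟩
  have ha2 : a + ε/2 ∈ Set.Ioo (a - ε) (a + ε) := ⟨by linarith, by linarith⟩
  obtain ⟨ra, rb, hha, _, _⟩ := hmono a haI (a + ε/2) ha2 (by linarith)
  -- hha : negInv (f a) = ↑ra
  cases hfa : f a with
  | coe r =>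
    -- f a is finite; show f itself is increasing near a
    left
    apply incAt_addPt
    simp only [hfa] at hha
    have hr : r ≠ 0 := by
      intro h0
      rw [h0] at hha
      have h1 : negInv ((0:ℝ) : OnePoint ℝ) = ∞ := by
        show (if (0:ℝ) = 0 then ∞ else _) = _
        rw [if_pos rfl]
      rw [h1] at hha
      exact (OnePoint.infty_ne_coe ra) hha
    set S : Set ℝ := if 0 < r then Set.Ioi (0:ℝ) else Set.Iio (0:ℝ) with hS
    have hSopen : IsOpen S := by
      rw [hS]; split
      · exact isOpen_Ioi
      · exact isOpen_Iio
    have hrS : r ∈ S := by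
      rw [hS]; split
      · assumption
      · exact lt_of_le_of_ne (le_of_not_gt (by assumption)) hr
    have hV : (fun s : ℝ => (s : OnePoint ℝ)) '' S ∈ nhds ((r : OnePoint ℝ)) := by
      rw [OnePoint.nhds_coe_eq]
      exact Filter.image_mem_map (hSopen.mem_nhds hrS)
    have hpre : {x : ℝ | f x ∈ (fun s : ℝ => (s : OnePoint ℝ)) '' S} ∈ nhds a := by
      apply hcont
      rw [hfa]; exact hV
    obtain ⟨δ, hδ, hball⟩ := Metric.mem_nhds_iff.mp hpre
    set d := min (δ/2) ε with hd
    have hd0 : 0 < d := lt_min (by linarith) hε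
    have hdε : d ≤ ε := min_le_right _ _
    have hsubd : Set.Ioo (a - d) (a + d) ⊆ Set.Ioo (a - ε) (a + ε) :=
      Set.Ioo_subset_Ioo (by linarith) (by linarith)
    have hballd : ∀ x ∈ Set.Ioo (a - d) (a + d), ∃ s ∈ S, (s : OnePoint ℝ) = f x := by
      intro x hx
      have hxb : x ∈ Metric.ball a δ := by
        rw [Metric.mem_ball, Real.dist_eq]
        have h1 := hx.1; have h2 := hx.2
        have hdδ : d ≤ δ/2 := min_le_left _ _
        rw [abs_lt]; constructor <;> linarith
      exact hball hxb
    refine ⟨d, hd0, fun x hx => hsub (hsubd hx), fun x hx y hy hxy => ?_⟩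
    obtain ⟨sx, hsxS, hsx⟩ := hballd x hx
    obtain ⟨sy, hsyS, hsy⟩ := hballd y hy
    obtain ⟨rx, ry, hhx, hhy, hlt⟩ := hmono x (hsubd hx) y (hsubd hy) hxy
    have hsx0 : sx ≠ 0 := by
      rw [hS] at hsxS; revert hsxS; split <;> intro h
      · exact ne_of_gt h
      · exact ne_of_lt h
    have hsy0 : sy ≠ 0 := by
      rw [hS] at hsyS; revert hsyS; split <;> intro h
      · exact ne_of_gt h
      · exact ne_of_lt h
    have hrx : rx = -1/sx := by
      have h1 : negInv (f x) = ((-1/sx : ℝ) : OnePoint ℝ) := by rw [← hsx, negInv_coe hsx0]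
      simp only [h1] at hhx
      exact (OnePoint.coe_eq_coe.mp hhx.symm)
    have hry : ry = -1/sy := by
      have h1 : negInv (f y) = ((-1/sy : ℝ) : OnePoint ℝ) := by rw [← hsy, negInv_coe hsy0]
      simp only [h1] at hhy
      exact (OnePoint.coe_eq_coe.mp hhy.symm)
    rw [hrx, hry] at hlt
    have hslt : sx < sy := by
      rw [hS] at hsxS hsyS
      by_cases h0r : 0 < r
      · simp only [h0r, if_true, Set.mem_Ioi] at hsxS hsyS
        exact lt_of_negInv_pos hsyS hlt
      · simp only [h0r, if_false, Set.mem_Iio] at hsxS hsyS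
        exact lt_of_negInv_neg hsxS hlt
    exact ⟨sx, sy, hsx.symm, hsy.symm, hslt⟩
  | infty =>
    -- f a = ∞ : show negInv ∘ (addPt f) is increasing near a
    right
    simp only [hfa] at hha
    have hra : ra = 0 := by
      have h1 : ((0:ℝ) : OnePoint ℝ) = (ra : OnePoint ℝ) := hha
      exact (OnePoint.coe_eq_coe.mp h1).symm
    set M : ℝ := |a| + ε + 1 with hM
    have hU : {p : OnePoint ℝ | p = ∞ ∨ ∃ s : ℝ, p = (s : OnePoint ℝ) ∧ M < |s|} ∈
        nhds (∞ : OnePoint ℝ) := by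
      rw [OnePoint.nhds_infty_eq]
      refine Filter.mem_sup.mpr ⟨?_, ?_⟩
      · rw [Filter.mem_map, Filter.hasBasis_coclosedCompact.mem_iff]
        refine ⟨Metric.closedBall 0 M, ⟨Metric.isClosed_closedBall, isCompact_closedBall 0 M⟩, ?_⟩
        intro s hs
        simp only [Set.mem_compl_iff, Metric.mem_closedBall, Real.dist_eq, sub_zero,
          not_le] at hs
        exact Or.inr ⟨s, rfl, hs⟩
      · exact Or.inl rfl
    have hpre : {x : ℝ | f x = ∞ ∨ ∃ s : ℝ, f x = (s : OnePoint ℝ) ∧ M < |s|} ∈ nhds a :=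
      hcont (by rw [hfa]; exact hU)
    obtain ⟨δ, hδ, hball⟩ := Metric.mem_nhds_iff.mp hpre
    set d := min (δ/2) ε with hd
    have hd0 : 0 < d := lt_min (by linarith) hε
    have hdε : d ≤ ε := min_le_right _ _
    have hsubd : Set.Ioo (a - d) (a + d) ⊆ Set.Ioo (a - ε) (a + ε) :=
      Set.Ioo_subset_Ioo (by linarith) (by linarith)
    have hballd : ∀ x ∈ Set.Ioo (a - d) (a + d),
        f x = ∞ ∨ ∃ s : ℝ, f x = (s : OnePoint ℝ) ∧ M < |s| := by
      intro x hx
      have hxb : x ∈ Metric.ball a δ := by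
        rw [Metric.mem_ball, Real.dist_eq]
        have h1 := hx.1; have h2 := hx.2
        have hdδ : d ≤ δ/2 := min_le_left _ _
        rw [abs_lt]; constructor <;> linarith
      exact hball hxb
    -- the profile of a point ≠ a in the interval
    have prof : ∀ x ∈ Set.Ioo (a - d) (a + d), x ≠ a → ∃ s : ℝ,
        f x = (s : OnePoint ℝ) ∧
        ((x < a → 0 < s ∧ 0 < s + x) ∧ (a < x → s < 0 ∧ s + x < 0)) := by
      intro x hx hxa
      have hxε : x ∈ Set.Ioo (a - ε) (a + ε) := hsubd hx
      have hrx : ∃ rx : ℝ, negInv (f x) = (rx : OnePoint ℝ) ∧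
          (x < a → rx < 0) ∧ (a < x → 0 < rx) := by
        rcases lt_or_gt_of_ne hxa with hlt | hgt
        · obtain ⟨rx, ra', hhx, hha', hord⟩ := hmono x hxε a haI hlt
          simp only [hfa] at hha'
          have h0 : ra' = 0 := by
            have h1 : ((0:ℝ) : OnePoint ℝ) = (ra' : OnePoint ℝ) := hha'
            exact (OnePoint.coe_eq_coe.mp h1).symm
          exact ⟨rx, hhx, fun _ => by rw [h0] at hord; exact hord,
            fun h => absurd h (not_lt.2 hlt.le)⟩
        · obtain ⟨ra', rx, hha', hhx, hord⟩ := hmono a haI x hxε hgt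
          simp only [hfa] at hha'
          have h0 : ra' = 0 := by
            have h1 : ((0:ℝ) : OnePoint ℝ) = (ra' : OnePoint ℝ) := hha'
            exact (OnePoint.coe_eq_coe.mp h1).symm
          exact ⟨rx, hhx, fun h => absurd h (not_lt.2 hgt.le),
            fun _ => by rw [h0] at hord; exact hord⟩
      obtain ⟨rx, hhx, hneg, hpos⟩ := hrx
      have hrx0 : rx ≠ 0 := by
        rcases lt_or_gt_of_ne hxa with hlt | hgt
        · exact ne_of_lt (hneg hlt)
        · exact ne_of_gt (hpos hgt)
      obtain ⟨s, hfs, hs0, hrs⟩ := finite_of_negInv hrx0 hhx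
      have hMs : M < |s| := by
        rcases hballd x hx with hinf | ⟨s', hfs', hMs'⟩
        · rw [hfs] at hinf; exact absurd hinf (OnePoint.coe_ne_infty s)
        · have hse : s = s' := OnePoint.coe_eq_coe.mp (hfs ▸ hfs')
          rw [hse]; exact hMs'
      have hxb : |x| < |a| + ε := by
        have h1 := hx.1; have h2 := hx.2
        have hna : -(|a|) ≤ a := neg_abs_le a
        have hpa : a ≤ |a| := le_abs_self a
        rw [abs_lt]; constructor <;> linarith
      refine ⟨s, hfs, ?_, ?_⟩
      · intro hlt
        have hrneg : rx < 0 := hneg hlt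
        rw [hrs] at hrneg
        have hspos : 0 < s := pos_of_negInv_neg hs0 hrneg
        have hsM : M < s := by rw [abs_of_pos hspos] at hMs; exact hMs
        refine ⟨hspos, ?_⟩
        have hx1 : -(|a| + ε) < x := (abs_lt.mp hxb).1
        rw [hM] at hsM; linarith
      · intro hgt
        have hrpos : 0 < rx := hpos hgt
        rw [hrs] at hrpos
        have hsneg : s < 0 := neg_of_negInv_pos hs0 hrpos
        have hsM : s < -M := by rw [abs_of_neg hsneg] at hMs; linarith
        refine ⟨hsneg, ?_⟩
        have hx2 : x < |a| + ε := (abs_lt.mp hxb).2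
        rw [hM] at hsM; linarith
    -- now establish the increasing property
    refine ⟨d, hd0, fun x hx => hsub (hsubd hx), fun x hx y hy hxy => ?_⟩
    have negInvVal : ∀ z ∈ Set.Ioo (a - d) (a + d), ∀ s : ℝ, f z = (s : OnePoint ℝ) →
        s + z ≠ 0 → negInv (addPt (f z) z) = ((-1/(s + z) : ℝ) : OnePoint ℝ) := by
      intro z _ s hfz hsz
      rw [hfz, addPt_coe, negInv_coe hsz]
    rcases lt_trichotomy y a with hya | hya | hya
    · -- x < y < a
      have hxa : x < a := hxy.trans hya
      obtain ⟨sx, hfx, hsx, _⟩ := prof x hx (ne_of_lt hxa)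
      obtain ⟨sy, hfy, hsy, _⟩ := prof y hy (ne_of_lt hya)
      obtain ⟨hsxp, hsxxp⟩ := hsx hxa
      obtain ⟨hsyp, hsyyp⟩ := hsy hya
      obtain ⟨rx, ry, hhx, hhy, hord⟩ := hmono x (hsubd hx) y (hsubd hy) hxy
      have hrx : rx = -1/sx := by
        have h1 : negInv (f x) = ((-1/sx : ℝ) : OnePoint ℝ) := by
          rw [hfx, negInv_coe (ne_of_gt hsxp)]
        simp only [h1] at hhx; exact (OnePoint.coe_eq_coe.mp hhx.symm)
      have hry : ry = -1/sy := by
        have h1 : negInv (f y) = ((-1/sy : ℝ) : OnePoint ℝ) := by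
          rw [hfy, negInv_coe (ne_of_gt hsyp)]
        simp only [h1] at hhy; exact (OnePoint.coe_eq_coe.mp hhy.symm)
      simp only [hrx, hry] at hord
      have hslt : sx < sy := lt_of_negInv_pos hsyp hord
      exact ⟨-1/(sx + x), -1/(sy + y),
        negInvVal x hx sx hfx (ne_of_gt hsxxp),
        negInvVal y hy sy hfy (ne_of_gt hsyyp),
        negInvLt_pos hsxxp (by linarith)⟩
    · -- y = a : x < a
      have hxa : x < a := hya ▸ hxy
      obtain ⟨sx, hfx, hsx, _⟩ := prof x hx (ne_of_lt hxa)
      obtain ⟨hsxp, hsxxp⟩ := hsx hxa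
      refine ⟨-1/(sx + x), 0, negInvVal x hx sx hfx (ne_of_gt hsxxp), ?_, ?_⟩
      · show negInv (addPt (f y) y) = _
        rw [hya, hfa, addPt_infty, negInv_infty]
      · have := negInv_neg_of_pos hsxxp; linarith
    · -- a < y
      have hwy : ∃ sy : ℝ, f y = (sy : OnePoint ℝ) ∧ sy < 0 ∧ sy + y < 0 := by
        obtain ⟨sy, hfy, _, hsy⟩ := prof y hy (ne_of_gt hya)
        obtain ⟨h1, h2⟩ := hsy hya
        exact ⟨sy, hfy, h1, h2⟩
      obtain ⟨sy, hfy, hsyn, hsyyn⟩ := hwy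
      rcases lt_trichotomy x a with hxa | hxa | hxa
      · -- x < a < y
        obtain ⟨sx, hfx, hsx, _⟩ := prof x hx (ne_of_lt hxa)
        obtain ⟨hsxp, hsxxp⟩ := hsx hxa
        refine ⟨-1/(sx + x), -1/(sy + y),
          negInvVal x hx sx hfx (ne_of_gt hsxxp),
          negInvVal y hy sy hfy (ne_of_lt hsyyn), ?_⟩
        have h1 := negInv_neg_of_pos hsxxp
        have h2 := negInv_pos_of_neg hsyyn
        linarith
      · -- x = a < y
        refine ⟨0, -1/(sy + y), ?_, negInvVal y hy sy hfy (ne_of_lt hsyyn), ?_⟩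
        · show negInv (addPt (f x) x) = _
          rw [hxa, hfa, addPt_infty, negInv_infty]
        · exact negInv_pos_of_neg hsyyn
      · -- a < x < y
        obtain ⟨sx, hfx, _, hsx⟩ := prof x hx (ne_of_gt hxa)
        obtain ⟨hsxn, hsxxn⟩ := hsx hxa
        obtain ⟨rx, ry, hhx, hhy, hord⟩ := hmono x (hsubd hx) y (hsubd hy) hxy
        have hrx : rx = -1/sx := by
          have h1 : negInv (f x) = ((-1/sx : ℝ) : OnePoint ℝ) := by
            rw [hfx, negInv_coe (ne_of_lt hsxn)]
          simp only [h1] at hhx; exact (OnePoint.coe_eq_coe.mp hhx.symm)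
        have hry : ry = -1/sy := by
          have h1 : negInv (f y) = ((-1/sy : ℝ) : OnePoint ℝ) := by
            rw [hfy, negInv_coe (ne_of_lt hsyn)]
          simp only [h1] at hhy; exact (OnePoint.coe_eq_coe.mp hhy.symm)
        simp only [hrx, hry] at hord
        have hslt : sx < sy := lt_of_negInv_neg hsxn hord
        exact ⟨-1/(sx + x), -1/(sy + y),
          negInvVal x hx sx hfx (ne_of_lt hsxxn),
          negInvVal y hy sy hfy (ne_of_lt hsyyn),
          negInvLt_neg hsyyn (by linarith)⟩
end

section
/- For every n ≥ 1, the polynomial p_n(α) = (-1)^{n+1}(2u_n(α) - l_n(α)) has exactly n distinct real roots (i.e., all of its roots are real and simple). -/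
open Polynomial

lemma ul_eval (n : ℕ) (θ : ℝ) :
    Real.sin θ * (aeval (2 - 2*Real.cos θ) (upoly n)) = -Real.sin (n*θ) ∧
    Real.sin θ * (aeval (2 - 2*Real.cos θ) (lpoly n)) =
      Real.sin θ * Real.cos (n*θ) + (Real.cos θ - 1) * Real.sin (n*θ) := by
  induction n with
  | zero => simp [upoly, lpoly, ul]
  | succ n ih =>
    obtain ⟨ih1, ih2⟩ := ih
    have hn1 : ((n+1 : ℕ) : ℝ) * θ = n*θ + θ := by push_cast; ring
    constructor
    · simp only [upoly, lpoly, ul, map_sub, map_mul, map_add, aeval_X, map_one, map_ofNat] at *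
      rw [hn1, Real.sin_add]
      linear_combination ih1 - ih2
    · simp only [upoly, lpoly, ul, map_sub, map_mul, map_add, aeval_X, map_one, map_ofNat] at *
      rw [hn1, Real.sin_add, Real.cos_add]
      linear_combination (2-2*Real.cos θ)*ih1 + (2*Real.cos θ - 1)*ih2 +
        Real.sin (n*θ)*(Real.sin_sq_add_cos_sq θ)

lemma one_sub_X_deg : (1 - X : Polynomial ℤ).degree = 1 := by
  have : (1 - X : Polynomial ℤ) = -(X - C 1) := by simp [map_one]
  rw [this, degree_neg, degree_X_sub_C]

lemma one_sub_X_lc : (1 - X : Polynomial ℤ).leadingCoeff = -1 := by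
  have : (1 - X : Polynomial ℤ) = -(X - C 1) := by simp [map_one]
  rw [this, leadingCoeff_neg, leadingCoeff_X_sub_C]

lemma ul_deg (n : ℕ) :
    (upoly n).degree < (n : ℕ) ∧ (lpoly n).degree = (n : ℕ) ∧
    (lpoly n).leadingCoeff = (-1)^n := by
  induction n with
  | zero =>
    refine ⟨?_, by simp [lpoly, ul], by simp [lpoly, ul]⟩
    simpa [upoly, ul, degree_zero] using WithBot.bot_lt_coe 0
  | succ n ih =>
    obtain ⟨hu, hl, hlc⟩ := ih
    have hB : ((1 - X) * lpoly n).degree = ((n+1 : ℕ) : WithBot ℕ) := by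
      rw [degree_mul, one_sub_X_deg, hl]
      norm_cast
      omega
    have hA : (X * upoly n).degree < ((n+1 : ℕ) : WithBot ℕ) := by
      rw [degree_mul, degree_X]
      calc 1 + (upoly n).degree < 1 + (n : ℕ) := by
            exact WithBot.add_lt_add_left (by simp) hu
        _ = ((n+1 : ℕ) : WithBot ℕ) := by push_cast; ring
    have hAB : (X * upoly n).degree < ((1 - X) * lpoly n).degree := hB ▸ hA
    refine ⟨?_, ?_, ?_⟩
    · show (upoly n - lpoly n).degree < _
      refine lt_of_le_of_lt (degree_sub_le _ _) (max_lt ?_ ?_)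
      · exact hu.trans (by norm_cast; omega)
      · rw [hl]; norm_cast; omega
    · show (X * upoly n + (1 - X) * lpoly n).degree = _
      rw [degree_add_eq_right_of_degree_lt hAB, hB]
    · show (X * upoly n + (1 - X) * lpoly n).leadingCoeff = _
      rw [leadingCoeff_add_of_degree_lt hAB, leadingCoeff_mul, one_sub_X_lc, hlc]
      ring

lemma ppoly_monic (n : ℕ) : (ppoly n).Monic ∧ (ppoly n).natDegree = n := by
  obtain ⟨hu, hl, hlc⟩ := ul_deg n
  have h2u : (2 * upoly n).degree < (lpoly n).degree := by
    rw [hl]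
    refine lt_of_le_of_lt (le_trans (degree_mul_le _ _) ?_) hu
    have h2 : (2 : Polynomial ℤ).degree ≤ 0 := by
      simpa using degree_C_le (a := (2:ℤ))
    calc (2 : Polynomial ℤ).degree + (upoly n).degree ≤ 0 + (upoly n).degree := by
          exact add_le_add_left h2 _
      _ = (upoly n).degree := by rw [zero_add]
  have hdeg : (2 * upoly n - lpoly n).degree = (n : ℕ) := by
    rw [sub_eq_add_neg, degree_add_eq_right_of_degree_lt (by rwa [degree_neg]), degree_neg, hl]
  have hlc2 : (2 * upoly n - lpoly n).leadingCoeff = (-1)^(n+1) := by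
    rw [sub_eq_add_neg, leadingCoeff_add_of_degree_lt (by rwa [degree_neg]), leadingCoeff_neg, hlc]
    ring
  have hC : ((-1 : Polynomial ℤ)^(n+1)) = C ((-1)^(n+1)) := by
    simp [map_pow]
  have hdp : (ppoly n).degree = (n : ℕ) := by
    rw [ppoly, hC, degree_C_mul (by simp), hdeg]
  constructor
  · show (ppoly n).leadingCoeff = 1
    rw [ppoly, hC, leadingCoeff_mul, leadingCoeff_C, hlc2, ← pow_add, ← two_mul, pow_mul]
    norm_num
  · exact natDegree_eq_of_degree_eq_some hdp

open Real in
lemma theta_mem (n k : ℕ) (hk1 : 1 ≤ k) (hkn : k ≤ n) :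
    0 < 2*(k:ℝ)*π/(2*n+1) ∧ 2*(k:ℝ)*π/(2*n+1) < π := by
  have hπ := Real.pi_pos
  have hd : (0:ℝ) < 2*n+1 := by positivity
  constructor
  · apply div_pos _ hd
    have : (1:ℝ) ≤ k := by exact_mod_cast hk1
    nlinarith
  · rw [div_lt_iff₀ hd]
    have : (k:ℝ) ≤ n := by exact_mod_cast hkn
    nlinarith

open Real in
lemma root_ppoly (n k : ℕ) (hk1 : 1 ≤ k) (hkn : k ≤ n) :
    aeval (2 - 2*Real.cos (2*(k:ℝ)*π/(2*n+1))) (ppoly n) = 0 := by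
  set θ : ℝ := 2*(k:ℝ)*π/(2*n+1) with hθdef
  obtain ⟨hpos, hlt⟩ := theta_mem n k hk1 hkn
  have hs : Real.sin θ ≠ 0 := ne_of_gt (Real.sin_pos_of_pos_of_lt_pi hpos hlt)
  obtain ⟨h1, h2⟩ := ul_eval n θ
  have hrel : (n:ℝ)*θ + θ = -((n:ℝ)*θ) + (k:ℕ) * (2*π) := by
    rw [hθdef]
    have hd : (2*(n:ℝ)+1) ≠ 0 := by positivity
    field_simp
    ring
  have hsin : Real.sin ((n:ℝ)*θ + θ) = -Real.sin ((n:ℝ)*θ) := by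
    rw [hrel, Real.sin_add_nat_mul_two_pi, Real.sin_neg]
  have key : Real.sin θ * (2 * aeval (2 - 2*Real.cos θ) (upoly n)
      - aeval (2 - 2*Real.cos θ) (lpoly n)) = 0 := by
    have hsa : Real.sin ((n:ℝ)*θ) * Real.cos θ + Real.cos ((n:ℝ)*θ) * Real.sin θ
        = -Real.sin ((n:ℝ)*θ) := by rw [← Real.sin_add, hsin]
    linear_combination 2*h1 - h2 - hsa
  have h0 : 2 * aeval (2 - 2*Real.cos θ) (upoly n) - aeval (2 - 2*Real.cos θ) (lpoly n) = 0 :=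
    (mul_eq_zero.mp key).resolve_left hs
  rw [ppoly]
  simp only [map_mul, map_sub, map_pow, map_neg, map_one, map_ofNat]
  rw [h0]
  ring

open Real in
theorem stmt18 (n : ℕ) (hn : 1 ≤ n) :
    ((ppoly n).map (Int.castRingHom ℂ)).roots.Nodup ∧
    Multiset.card ((ppoly n).map (Int.castRingHom ℂ)).roots = n ∧
    ∀ z ∈ ((ppoly n).map (Int.castRingHom ℂ)).roots, ∃ x : ℝ, z = (x : ℂ) := by
  obtain ⟨hmon, hdeg⟩ := ppoly_monic n
  set q : Polynomial ℂ := (ppoly n).map (Int.castRingHom ℂ) with hq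
  have hqmon : q.Monic := hmon.map _
  have hqne : q ≠ 0 := hqmon.ne_zero
  have hqdeg : q.natDegree = n := by
    rw [hq, hmon.natDegree_map, hdeg]
  have hcard : Multiset.card q.roots = n := by
    rw [← hqdeg]
    exact (Polynomial.splits_iff_card_roots.mp (IsAlgClosed.splits q))
  -- the candidate roots
  set f : ℕ → ℝ := fun k => 2 - 2*Real.cos (2*(k:ℝ)*π/(2*n+1)) with hf
  have hroot : ∀ k, 1 ≤ k → k ≤ n → eval ((f k : ℝ) : ℂ) q = 0 := by
    intro k hk1 hkn
    have hr : aeval (f k) (ppoly n) = 0 := root_ppoly n k hk1 hkn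
    have hcomp : q = ((ppoly n).map (Int.castRingHom ℝ)).map (algebraMap ℝ ℂ) := by
      rw [hq, Polynomial.map_map]
      congr 1
    rw [hcomp, eval_map,
      show ((f k : ℝ) : ℂ) = algebraMap ℝ ℂ (f k) from rfl, Polynomial.eval₂_at_apply]
    have : eval (f k) ((ppoly n).map (Int.castRingHom ℝ)) = aeval (f k) (ppoly n) := by
      rw [aeval_def, eval_map]
      rfl
    rw [this, hr, map_zero]
  have hinj : Set.InjOn (fun k : ℕ => ((f k : ℝ) : ℂ)) (Finset.Icc 1 n) := by
    intro a ha b hb hab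
    simp only [Finset.coe_Icc, Set.mem_Icc] at ha hb
    have hab' : f a = f b := Complex.ofReal_inj.mp hab
    have hca : Real.cos (2*(a:ℝ)*π/(2*n+1)) = Real.cos (2*(b:ℝ)*π/(2*n+1)) := by
      simp only [hf] at hab'
      linarith
    obtain ⟨ha1, ha2⟩ := theta_mem n a ha.1 ha.2
    obtain ⟨hb1, hb2⟩ := theta_mem n b hb.1 hb.2
    have hθeq : 2*(a:ℝ)*π/(2*n+1) = 2*(b:ℝ)*π/(2*n+1) :=
      Real.injOn_cos ⟨le_of_lt ha1, le_of_lt ha2⟩ ⟨le_of_lt hb1, le_of_lt hb2⟩ hca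
    have hd : (2*(n:ℝ)+1) ≠ 0 := by positivity
    field_simp at hθeq
    have := hθeq
    exact_mod_cast this
  set S : Finset ℂ := (Finset.Icc 1 n).image (fun k : ℕ => ((f k : ℝ) : ℂ)) with hS
  have hScard : S.card = n := by
    rw [hS, Finset.card_image_of_injOn hinj, Nat.card_Icc]
    omega
  have hle : S.val ≤ q.roots := by
    rw [Multiset.le_iff_subset S.nodup]
    intro z hz
    rw [← Finset.mem_def, hS, Finset.mem_image] at hz
    obtain ⟨k, hk, rfl⟩ := hz
    rw [Finset.mem_Icc] at hk
    rw [mem_roots hqne]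
    exact hroot k hk.1 hk.2
  have heq : S.val = q.roots := by
    apply Multiset.eq_of_le_of_card_le hle
    rw [hcard]
    show n ≤ Multiset.card S.val
    rw [← Finset.card_def, hScard]
  refine ⟨heq ▸ S.nodup, hcard, ?_⟩
  intro z hz
  rw [← heq, ← Finset.mem_def, hS, Finset.mem_image] at hz
  obtain ⟨k, _, rfl⟩ := hz
  exact ⟨f k, rfl⟩
end

section
/- Let α_n denote the maximal real root of p_n(α) = (-1)^{n+1}(2u_n(α) - l_n(α)). Then α₁ = 3, α₂ = (5+√5)/2, the sequence (α_n) is strictly increasing, each α_n lies in the interval (3,4) for n ≥ 2 (and α_n < 4 for all n), and α_n → 4 as n → ∞. -/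
open Polynomial

noncomputable def maxroot (n : ℕ) : ℝ :=
  sSup {x : ℝ | Polynomial.aeval x (ppoly n) = 0}

lemma ppoly_zero : ppoly 0 = 1 := by
  simp [ppoly, upoly, lpoly, ul]

lemma ppoly_one : ppoly 1 = X - 3 := by
  simp [ppoly, upoly, lpoly, ul]; ring

lemma ppoly_rec (n : ℕ) : ppoly (n + 2) = (X - 2) * ppoly (n + 1) - ppoly n := by
  simp only [ppoly, upoly, lpoly, ul, pow_succ]
  ring

/-- evaluation abbreviation -/
noncomputable def pe (n : ℕ) (x : ℝ) : ℝ := Polynomial.aeval x (ppoly n)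

lemma pe_zero (x : ℝ) : pe 0 x = 1 := by simp [pe, ppoly_zero]

lemma pe_one (x : ℝ) : pe 1 x = x - 3 := by
  simp [pe, ppoly_one, map_ofNat]

lemma pe_rec (n : ℕ) (x : ℝ) : pe (n + 2) x = (x - 2) * pe (n + 1) x - pe n x := by
  simp [pe, ppoly_rec, sub_mul, map_ofNat]

lemma pe_cos (θ : ℝ) (n : ℕ) :
    pe n (2 + 2 * Real.cos θ) * Real.cos (θ / 2) = Real.cos ((2 * n + 1) * θ / 2) := by
  induction n using Nat.twoStepInduction with
  | zero => simp [pe_zero]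
  | one =>
      have h := Real.cos_add_cos (3 * θ / 2) (θ / 2)
      have e1 : (3 * θ / 2 + θ / 2) / 2 = θ := by ring
      have e2 : (3 * θ / 2 - θ / 2) / 2 = θ / 2 := by ring
      rw [e1, e2] at h
      rw [pe_one]
      push_cast
      nlinarith [h]
  | more n ih1 ih2 =>
      have h := Real.cos_add_cos ((2 * (n + 2 : ℕ) + 1) * θ / 2) ((2 * n + 1) * θ / 2)
      have e1 : ((2 * (n + 2 : ℕ) + 1) * θ / 2 + (2 * n + 1) * θ / 2) / 2
          = (2 * (n + 1 : ℕ) + 1) * θ / 2 := by push_cast; ring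
      have e2 : ((2 * (n + 2 : ℕ) + 1) * θ / 2 - (2 * n + 1) * θ / 2) / 2 = θ := by
        push_cast; ring
      rw [e1, e2] at h
      rw [pe_rec]
      linear_combination (2 * Real.cos θ) * ih2 - ih1 - h

lemma pe_ge_four (x : ℝ) (hx : 4 ≤ x) : ∀ n, 1 ≤ pe n x ∧ pe n x ≤ pe (n + 1) x := by
  intro n
  induction n with
  | zero => rw [pe_zero, pe_one]; constructor <;> linarith
  | succ n ih =>
      obtain ⟨h1, h2⟩ := ih
      have h3 := pe_rec n x
      constructor
      · linarith
      · nlinarith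

open Real

lemma maxroot_eq (n : ℕ) (hn : 1 ≤ n) :
    maxroot n = 2 + 2 * Real.cos (π / (2 * n + 1)) := by
  have hd : (0 : ℝ) < 2 * n + 1 := by positivity
  have hθpos : 0 < π / (2 * n + 1) := div_pos pi_pos hd
  have hθle : π / (2 * n + 1) ≤ π / 3 := by
    apply div_le_div_of_nonneg_left pi_pos.le (by norm_num)
    have : (1 : ℝ) ≤ (n : ℝ) := by exact_mod_cast hn
    linarith
  have hθltpi : π / (2 * n + 1) < π := by
    have := pi_pos; linarith [hθle]
  apply IsGreatest.csSup_eq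
  constructor
  · -- membership: it is a root
    show pe n _ = 0
    have h := pe_cos (π / (2 * n + 1)) n
    have e : (2 * n + 1) * (π / (2 * n + 1)) / 2 = π / 2 := by
      field_simp
    rw [e, Real.cos_pi_div_two] at h
    have hc : Real.cos (π / (2 * n + 1) / 2) > 0 := by
      apply Real.cos_pos_of_mem_Ioo
      constructor <;> [linarith; linarith]
    exact (mul_eq_zero.mp h).resolve_right (by linarith)
  · -- upper bound
    intro x hx
    by_contra hlt
    push_neg at hlt
    have hroot : pe n x = 0 := hx
    rcases le_or_gt 4 x with h4 | h4
    · have := (pe_ge_four x h4 n).1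
      linarith
    · -- 2 + 2cos(π/(2n+1)) < x < 4
      set c : ℝ := (x - 2) / 2 with hc
      have hc1 : c < 1 := by rw [hc]; linarith
      have hcge : Real.cos (π / (2 * n + 1)) < c := by rw [hc]; linarith
      have hcm1 : -1 ≤ c := by
        have := Real.neg_one_le_cos (π / (2 * n + 1)); linarith
      set θ : ℝ := Real.arccos c with hθ
      have hθ0 : 0 < θ := Real.arccos_pos.mpr hc1
      have hcosθ : Real.cos θ = c := Real.cos_arccos hcm1 (le_of_lt hc1)
      have hθlt : θ < π / (2 * n + 1) := by
        by_contra hge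
        push_neg at hge
        have : Real.cos θ ≤ Real.cos (π / (2 * n + 1)) := by
          rcases eq_or_lt_of_le hge with he | hlt'
          · rw [he]
          · exact le_of_lt (Real.cos_lt_cos_of_nonneg_of_le_pi hθpos.le
              (Real.arccos_le_pi c) hlt')
        linarith
      have hxe : x = 2 + 2 * Real.cos θ := by rw [hcosθ]; rw [hc]; ring
      have h := pe_cos θ n
      rw [← hxe, hroot, zero_mul] at h
      have harg : 0 < (2 * n + 1) * θ / 2 := by positivity
      have harg2 : (2 * n + 1) * θ / 2 < π / 2 := by
        have : (2 * n + 1) * θ < π := by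
          have := (lt_div_iff₀ hd).mp hθlt
          nlinarith
        linarith
      have : 0 < Real.cos ((2 * n + 1) * θ / 2) := by
        apply Real.cos_pos_of_mem_Ioo
        constructor
        · linarith [pi_pos]
        · exact harg2
      linarith [this, h.symm]

theorem stmt19 :
    maxroot 1 = 3 ∧
    maxroot 2 = (5 + Real.sqrt 5) / 2 ∧
    (∀ n : ℕ, 1 ≤ n → maxroot n < maxroot (n + 1)) ∧
    (∀ n : ℕ, 1 ≤ n → maxroot n < 4) ∧
    (∀ n : ℕ, 2 ≤ n → maxroot n ∈ Set.Ioo (3 : ℝ) 4) ∧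
    Filter.Tendsto (fun n => maxroot (n + 1)) Filter.atTop (nhds 4) := by
  have key : ∀ n : ℕ, 1 ≤ n → maxroot n = 2 + 2 * Real.cos (π / (2 * n + 1)) :=
    maxroot_eq
  have hlt4 : ∀ n : ℕ, 1 ≤ n → maxroot n < 4 := by
    intro n hn
    rw [key n hn]
    have hd : (0 : ℝ) < 2 * n + 1 := by positivity
    have h1 : Real.cos (π / (2 * n + 1)) < Real.cos 0 := by
      apply Real.cos_lt_cos_of_nonneg_of_le_pi le_rfl
      · apply div_le_self pi_pos.le; linarith
      · exact div_pos pi_pos hd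
    rw [Real.cos_zero] at h1
    linarith
  refine ⟨?_, ?_, ?_, hlt4, ?_, ?_⟩
  · rw [key 1 le_rfl]
    norm_num [Real.cos_pi_div_three]
  · rw [key 2 (by norm_num)]
    have : (2 : ℝ) * (2 : ℕ) + 1 = 5 := by norm_num
    rw [this, Real.cos_pi_div_five]
    ring
  · intro n hn
    rw [key n hn, key (n + 1) (by omega)]
    have hd : (0 : ℝ) < 2 * n + 1 := by positivity
    have h : Real.cos (π / (2 * n + 1)) < Real.cos (π / (2 * (n + 1 : ℕ) + 1)) := by
      apply Real.cos_lt_cos_of_nonneg_of_le_pi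
      · positivity
      · apply div_le_self pi_pos.le; linarith
      · apply div_lt_div_of_pos_left pi_pos (by positivity)
        push_cast; linarith
    linarith
  · intro n hn
    constructor
    · rw [key n (by omega)]
      have hd : (0 : ℝ) < 2 * n + 1 := by positivity
      have hn5 : (5 : ℝ) ≤ 2 * n + 1 := by
        have : (2 : ℝ) ≤ (n : ℝ) := by exact_mod_cast hn
        linarith
      have h : Real.cos (π / 3) < Real.cos (π / (2 * n + 1)) := by
        apply Real.cos_lt_cos_of_nonneg_of_le_pi
        · positivity
        · apply div_le_self pi_pos.le; norm_num
        · exact div_lt_div_of_pos_left pi_pos (by norm_num) (by linarith)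
      rw [Real.cos_pi_div_three] at h
      linarith
    · exact hlt4 n (by omega)
  · have heq : (fun n : ℕ => maxroot (n + 1))
        = fun n : ℕ => 2 + 2 * Real.cos (π / (2 * (n + 1 : ℕ) + 1)) := by
      funext n; exact key (n + 1) (by omega)
    rw [heq]
    have h4 : (4 : ℝ) = 2 + 2 * Real.cos 0 := by rw [Real.cos_zero]; ring
    rw [h4]
    apply Filter.Tendsto.const_add
    apply Filter.Tendsto.const_mul
    have harg : Filter.Tendsto (fun n : ℕ => π / (2 * (n + 1 : ℕ) + 1))
        Filter.atTop (nhds 0) := by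
      apply Filter.Tendsto.div_atTop tendsto_const_nhds
      apply Filter.tendsto_atTop_mono (fun n : ℕ => ?_) tendsto_natCast_atTop_atTop
      push_cast; linarith
    exact (Real.continuous_cos.tendsto 0).comp harg
end
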